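/- Let θ ∈ (0,π)³ with θ₁ ≤ θ₂ ≤ θ₃, θ₁+θ₂+θ₃ ∈ πℤ, and all θⱼ pairwise distinct. Then the stabilizer in SU(3) of the ordered pair (V₀, V_θ) is exactly the group of diagonal matrices diag(ε₁,ε₂,ε₃) with εⱼ ∈ {±1} and ε₁ε₂ε₃ = 1, which is isomorphic to ℤ/2 × ℤ/2. -/
import Mathlib


open scoped Real ComplexConjugate
open Finset

/-- The standard real subspace `V₀ = ℝⁿ ⊂ ℂⁿ`, the real span of the standard basis. -/
noncomputable def V0 (n : ℕ) : Submodule ℝ (Fin n → ℂ) :=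
  Submodule.span ℝ (Set.range fun j => (Pi.single j 1 : Fin n → ℂ))

/-- The plane `V_θ = {(e^{iθ₁}x₁, …, e^{iθₙ}xₙ) : xⱼ ∈ ℝ}`, i.e. the real span of the vectors
`e^{iθⱼ} eⱼ`. -/
noncomputable def Vtheta (n : ℕ) (θ : Fin n → ℝ) : Submodule ℝ (Fin n → ℂ) :=
  Submodule.span ℝ (Set.range fun j => (Pi.single j (Complex.exp (θ j * Complex.I)) : Fin n → ℂ))

/-- The standard symplectic form `ω₀ = Im h` on `ℂⁿ`, `h` being the standard Hermitian metric. -/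
noncomputable def omega0 {n : ℕ} (z w : Fin n → ℂ) : ℝ :=
  (∑ j, conj (z j) * w j).im

/-- `ω₀` vanishes identically on `V`. -/
def OmegaVanishes {n : ℕ} (V : Submodule ℝ (Fin n → ℂ)) : Prop :=
  ∀ v ∈ V, ∀ w ∈ V, omega0 v w = 0

/-- `Im Ω₀` vanishes identically on `V`, where `Ω₀ = dz₁ ∧ ⋯ ∧ dzₙ` is the standard holomorphic
volume form: for any `n` vectors of `V` the determinant they span has vanishing imaginary part. -/
def ImVolVanishes {n : ℕ} (V : Submodule ℝ (Fin n → ℂ)) : Prop :=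
  ∀ b : Fin n → (Fin n → ℂ), (∀ i, b i ∈ V) → ((Matrix.of fun i j => b i j).det).im = 0

/-- A real `n`-dimensional subspace of `ℂⁿ` is special Lagrangian if `ω₀` and `Im Ω₀` vanish
identically on it. -/
def IsSpecialLagrangian (n : ℕ) (V : Submodule ℝ (Fin n → ℂ)) : Prop :=
  Module.finrank ℝ V = n ∧ OmegaVanishes V ∧ ImVolVanishes V


/-- The action of a complex `n×n` matrix on `ℂⁿ`, as a real-linear map. -/
noncomputable def actL {n : ℕ} (M : Matrix (Fin n) (Fin n) ℂ) :
    (Fin n → ℂ) →ₗ[ℝ] (Fin n → ℂ) :=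
  (Matrix.mulVecLin M).restrictScalars ℝ

lemma actL_mul {n : ℕ} (M N : Matrix (Fin n) (Fin n) ℂ) :
    actL (M * N) = (actL M).comp (actL N) := by
  ext v
  simp [actL, Matrix.mulVecLin_mul]

lemma actL_one {n : ℕ} : actL (1 : Matrix (Fin n) (Fin n) ℂ) = LinearMap.id := by
  ext v
  simp [actL]

/-- The stabilizer in `SU(3)` of the ordered pair of subspaces `(V₀, V_θ)`, realized as a
subgroup of the unitary group `U(3)` (its elements have determinant one, i.e. lie in `SU(3)`). -/
noncomputable def stabSU (θ : Fin 3 → ℝ) : Subgroup (Matrix.unitaryGroup (Fin 3) ℂ) where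
  carrier := {B | (B : Matrix (Fin 3) (Fin 3) ℂ).det = 1 ∧
    Submodule.map (actL (B : Matrix (Fin 3) (Fin 3) ℂ)) (V0 3) = V0 3 ∧
    Submodule.map (actL (B : Matrix (Fin 3) (Fin 3) ℂ)) (Vtheta 3 θ) = Vtheta 3 θ}
  one_mem' := by
    refine ⟨by simp, ?_, ?_⟩ <;>
      simp [actL_one, Submodule.map_id, OneMemClass.coe_one]
  mul_mem' := by
    rintro a b ⟨ha1, ha2, ha3⟩ ⟨hb1, hb2, hb3⟩
    refine ⟨by simp [MulMemClass.coe_mul, Matrix.det_mul, ha1, hb1], ?_, ?_⟩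
    · rw [MulMemClass.coe_mul, actL_mul, Submodule.map_comp, hb2, ha2]
    · rw [MulMemClass.coe_mul, actL_mul, Submodule.map_comp, hb3, ha3]
  inv_mem' := by
    rintro a ⟨ha1, ha2, ha3⟩
    have hinv : ((a⁻¹ : Matrix.unitaryGroup (Fin 3) ℂ) : Matrix (Fin 3) (Fin 3) ℂ) *
        (a : Matrix (Fin 3) (Fin 3) ℂ) = 1 := by
      rw [← MulMemClass.coe_mul, inv_mul_cancel, OneMemClass.coe_one]
    have hdet : ((a⁻¹ : Matrix.unitaryGroup (Fin 3) ℂ) : Matrix (Fin 3) (Fin 3) ℂ).det = 1 := by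
      have := congrArg Matrix.det hinv
      rw [Matrix.det_mul, ha1, mul_one, Matrix.det_one] at this
      exact this
    refine ⟨hdet, ?_, ?_⟩
    · conv_lhs => rw [← ha2]
      rw [← Submodule.map_comp, ← actL_mul, hinv, actL_one, Submodule.map_id]
    · conv_lhs => rw [← ha3]
      rw [← Submodule.map_comp, ← actL_mul, hinv, actL_one, Submodule.map_id]

/-- `SO(3)` as the subgroup of the orthogonal group `O(3)` of matrices of determinant one. -/
noncomputable def SO3 : Subgroup (Matrix.orthogonalGroup (Fin 3) ℝ) where
  carrier := {A | (A : Matrix (Fin 3) (Fin 3) ℝ).det = 1}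
  one_mem' := by simp
  mul_mem' := by
    intro a b ha hb
    simp only [Set.mem_setOf_eq, MulMemClass.coe_mul, Matrix.det_mul] at *
    rw [ha, hb, mul_one]
  inv_mem' := by
    intro a ha
    have hinv : ((a⁻¹ : Matrix.orthogonalGroup (Fin 3) ℝ) : Matrix (Fin 3) (Fin 3) ℝ) *
        (a : Matrix (Fin 3) (Fin 3) ℝ) = 1 := by
      rw [← MulMemClass.coe_mul, inv_mul_cancel, OneMemClass.coe_one]
    have := congrArg Matrix.det hinv
    simp only [Set.mem_setOf_eq] at *
    rw [Matrix.det_mul, ha, mul_one, Matrix.det_one] at this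
    exact this


section AuxLemmas

/-- The submodule of vectors whose `j`-th entry is a real multiple of `e^{iθⱼ}`. -/
noncomputable def phasePart (n : ℕ) (θ : Fin n → ℝ) : Submodule ℝ (Fin n → ℂ) where
  carrier := {v | ∀ j, (Complex.exp (-θ j * Complex.I) * v j).im = 0}
  add_mem' := by
    intro a b ha hb j
    simp only [Pi.add_apply, mul_add, Complex.add_im, ha j, hb j, add_zero]
  zero_mem' := by intro j; simp
  smul_mem' := by
    intro c v hv j
    have h : Complex.exp (-θ j * Complex.I) * ((c : ℂ) * v j)
        = (c : ℂ) * (Complex.exp (-θ j * Complex.I) * v j) := by ring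
    simp only [Pi.smul_apply, Complex.real_smul, h, Complex.mul_im, Complex.ofReal_re,
      Complex.ofReal_im, hv j, mul_zero, zero_mul, add_zero]

lemma mem_Vtheta_iff {n : ℕ} (θ : Fin n → ℝ) (v : Fin n → ℂ) :
    v ∈ Vtheta n θ ↔ ∀ j, (Complex.exp (-θ j * Complex.I) * v j).im = 0 := by
  constructor
  · intro hv
    have hle : Vtheta n θ ≤ phasePart n θ := by
      rw [Vtheta, Submodule.span_le]
      rintro _ ⟨j, rfl⟩ k
      by_cases h : j = k
      · subst h
        simp only [Pi.single_eq_same, ← Complex.exp_add]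
        have h0 : -↑(θ j) * Complex.I + ↑(θ j) * Complex.I = 0 := by ring
        rw [h0, Complex.exp_zero, Complex.one_im]
      · simp [Pi.single_apply, h]
    exact hle hv
  · intro hv
    have hrepr : v = ∑ j, ((Complex.exp (-θ j * Complex.I) * v j).re) •
        (Pi.single j (Complex.exp (θ j * Complex.I)) : Fin n → ℂ) := by
      funext k
      rw [Finset.sum_apply]
      have : ∀ j, (((Complex.exp (-θ j * Complex.I) * v j).re) •
          (Pi.single j (Complex.exp (θ j * Complex.I)) : Fin n → ℂ)) k
          = (Pi.single j (((Complex.exp (-θ j * Complex.I) * v j).re : ℂ) *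
              Complex.exp (θ j * Complex.I)) : Fin n → ℂ) k := by
        intro j
        by_cases h : j = k
        · subst h; simp [Complex.real_smul]
        · simp [Pi.single_apply, h]
      rw [Finset.sum_congr rfl (fun j _ => this j), Finset.sum_pi_single]
      simp only [Finset.mem_univ, if_true]
      have hz : ((Complex.exp (-θ k * Complex.I) * v k).re : ℂ)
          = Complex.exp (-θ k * Complex.I) * v k :=
        Complex.ext (by simp) (by simpa [Complex.mul_im] using (hv k).symm)
      rw [hz, mul_comm (Complex.exp (-θ k * Complex.I)) (v k), mul_assoc,
        ← Complex.exp_add]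
      have h0 : -↑(θ k) * Complex.I + ↑(θ k) * Complex.I = 0 := by ring
      rw [h0, Complex.exp_zero, mul_one]
    rw [hrepr]
    exact Submodule.sum_mem _ fun j _ => Submodule.smul_mem _ _
      (Submodule.subset_span ⟨j, rfl⟩)

lemma mem_V0_iff {n : ℕ} (v : Fin n → ℂ) : v ∈ V0 n ↔ ∀ j, (v j).im = 0 := by
  have h : V0 n = Vtheta n (fun _ => 0) := by
    rw [V0, Vtheta]
    congr 1
    ext w
    constructor <;> rintro ⟨j, rfl⟩ <;> exact ⟨j, by norm_num⟩
  rw [h, mem_Vtheta_iff]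
  constructor <;> intro h j <;> have := h j <;> simpa using this

lemma map_span_eq {n : ℕ} (M : Matrix (Fin n) (Fin n) ℂ) (g : Fin n → (Fin n → ℂ))
    (ε : Fin n → ℝ) (hM : ∀ j, actL M (g j) = ε j • g j) (hε : ∀ j, ε j * ε j = 1) :
    Submodule.map (actL M) (Submodule.span ℝ (Set.range g)) = Submodule.span ℝ (Set.range g) := by
  rw [Submodule.map_span]
  apply le_antisymm
  · rw [Submodule.span_le]
    rintro _ ⟨_, ⟨j, rfl⟩, rfl⟩
    rw [hM j]
    exact Submodule.smul_mem _ _ (Submodule.subset_span ⟨j, rfl⟩)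
  · rw [Submodule.span_le]
    rintro _ ⟨j, rfl⟩
    have : g j = ε j • (actL M (g j)) := by
      rw [hM j, smul_smul, hε j, one_smul]
    rw [this]
    exact Submodule.smul_mem _ _ (Submodule.subset_span ⟨g j, ⟨j, rfl⟩, rfl⟩)

noncomputable def sgn2 (a : ZMod 2) : ℝ := if a = 0 then 1 else -1

lemma sgn2_cases (a : ZMod 2) : sgn2 a = 1 ∨ sgn2 a = -1 := by
  unfold sgn2; split <;> simp

lemma sgn2_add (a b : ZMod 2) : sgn2 (a + b) = sgn2 a * sgn2 b := by
  have h : ∀ c : ZMod 2, c = 0 ∨ c = 1 := by decide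
  have h11 : (1 + 1 : ZMod 2) = 0 := by decide
  have h20 : (2 : ZMod 2) = 0 := by decide
  rcases h a with ha | ha <;> rcases h b with hb | hb <;>
    subst ha <;> subst hb <;> norm_num [sgn2, h11, h20] <;> exact h20

lemma sgn2_inj {a b : ZMod 2} (h : sgn2 a = sgn2 b) : a = b := by
  have h2 : ∀ c : ZMod 2, c = 0 ∨ c = 1 := by decide
  rcases h2 a with ha | ha <;> rcases h2 b with hb | hb <;>
    subst ha <;> subst hb <;> first | rfl | (norm_num [sgn2] at h)


noncomputable def eps3 (q : ZMod 2 × ZMod 2) : Fin 3 → ℝ := ![sgn2 q.1, sgn2 q.2, sgn2 (q.1 + q.2)]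

lemma eps3_pm (q : ZMod 2 × ZMod 2) (j : Fin 3) : eps3 q j = 1 ∨ eps3 q j = -1 := by
  fin_cases j <;> exact sgn2_cases _

lemma sgn2_mul_self (a : ZMod 2) : sgn2 a * sgn2 a = 1 := by
  rcases sgn2_cases a with h | h <;> rw [h] <;> norm_num

lemma eps3_prod (q : ZMod 2 × ZMod 2) : eps3 q 0 * eps3 q 1 * eps3 q 2 = 1 := by
  show sgn2 q.1 * sgn2 q.2 * sgn2 (q.1 + q.2) = 1
  rw [← sgn2_add]
  exact sgn2_mul_self _

noncomputable def inv2 (r : ℝ) : ZMod 2 := if r = 1 then 0 else 1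

lemma sgn2_inv2 {r : ℝ} (h : r = 1 ∨ r = -1) : sgn2 (inv2 r) = r := by
  rcases h with h | h <;> subst h <;> norm_num [sgn2, inv2]

lemma diag_mem_unitary (ε : Fin 3 → ℝ) (hε : ∀ j, ε j = 1 ∨ ε j = -1) :
    (Matrix.diagonal fun j => (ε j : ℂ)) ∈ Matrix.unitaryGroup (Fin 3) ℂ := by
  rw [Matrix.mem_unitaryGroup_iff]
  have h1 : star (Matrix.diagonal fun j => (ε j : ℂ))
      = Matrix.diagonal fun j => ((ε j : ℝ) : ℂ) := by
    rw [Matrix.star_eq_conjTranspose, Matrix.diagonal_conjTranspose]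
    refine congrArg Matrix.diagonal (funext fun j => ?_)
    rw [Pi.star_apply, Complex.star_def, Complex.conj_ofReal]
  rw [h1, Matrix.diagonal_mul_diagonal]
  have h2 : (fun j => ((ε j : ℝ) : ℂ) * ((ε j : ℝ) : ℂ)) = fun _ => (1 : ℂ) := by
    funext j
    rcases hε j with h | h <;> rw [h] <;> norm_num
  rw [h2, Matrix.diagonal_one]

end AuxLemmas

/-- For nondecreasing `θ ∈ (0,π)³` with `Σθ ∈ πℤ` and pairwise distinct
entries, the stabilizer in `SU(3)` of `(V₀, V_θ)` is exactly the set of diagonal matrices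
`diag(ε₁,ε₂,ε₃)` with `εⱼ ∈ {±1}` and `ε₁ε₂ε₃ = 1`, a group isomorphic to `ℤ/2 × ℤ/2`. -/
theorem stabilizer_eq_klein_four (θ : Fin 3 → ℝ)
    (hθ : ∀ j, θ j ∈ Set.Ioo (0 : ℝ) π) (hmono : Monotone θ)
    (hsum : ∃ k : ℤ, (∑ j, θ j) = k * π)
    (hdist : θ 0 ≠ θ 1 ∧ θ 1 ≠ θ 2 ∧ θ 0 ≠ θ 2) :
    ((stabSU θ : Set (Matrix.unitaryGroup (Fin 3) ℂ)) =
      {B : Matrix.unitaryGroup (Fin 3) ℂ | ∃ ε : Fin 3 → ℝ, (∀ j, ε j = 1 ∨ ε j = -1) ∧ ε 0 * ε 1 * ε 2 = 1 ∧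
        (B : Matrix (Fin 3) (Fin 3) ℂ) = Matrix.diagonal fun j => (ε j : ℂ)}) ∧
    Nonempty (stabSU θ ≃* Multiplicative (ZMod 2 × ZMod 2)) := by
  obtain ⟨h01, h12, h02⟩ := hdist
  have hsin : ∀ i j : Fin 3, i ≠ j → Real.sin (θ j - θ i) ≠ 0 := by
    intro i j hij
    have hθne : θ i ≠ θ j := by
      fin_cases i <;> fin_cases j <;>
        first
          | exact absurd rfl hij
          | exact h01
          | exact h12
          | exact h02
          | exact h01.symm
          | exact h12.symm
          | exact h02.symm
    rcases lt_or_gt_of_ne hθne with h | h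
    · exact ne_of_gt (Real.sin_pos_of_pos_of_lt_pi (by linarith)
        (by linarith [(hθ i).1, (hθ j).2]))
    · have hpos := Real.sin_pos_of_pos_of_lt_pi (x := θ i - θ j) (by linarith)
        (by linarith [(hθ j).1, (hθ i).2])
      have hs : θ j - θ i = -(θ i - θ j) := by ring
      rw [hs, Real.sin_neg]
      exact neg_ne_zero.mpr (ne_of_gt hpos)
  have hset : ((stabSU θ : Set (Matrix.unitaryGroup (Fin 3) ℂ)) =
      {B : Matrix.unitaryGroup (Fin 3) ℂ | ∃ ε : Fin 3 → ℝ, (∀ j, ε j = 1 ∨ ε j = -1) ∧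
        ε 0 * ε 1 * ε 2 = 1 ∧
        (B : Matrix (Fin 3) (Fin 3) ℂ) = Matrix.diagonal fun j => (ε j : ℂ)}) := by
    ext B
    simp only [SetLike.mem_coe, Set.mem_setOf_eq]
    constructor
    · rintro ⟨hdet, hm0, hmθ⟩
      set M := (B : Matrix (Fin 3) (Fin 3) ℂ) with hM
      have hreal : ∀ i j, (M i j).im = 0 := by
        intro i j
        have hmem : actL M (Pi.single j 1) ∈ V0 3 := by
          rw [← hm0]
          exact Submodule.mem_map_of_mem (Submodule.subset_span ⟨j, rfl⟩)
        have hcol := (mem_V0_iff _).mp hmem i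
        have h2 : (actL M (Pi.single j 1)) i = M i j := by
          simp [actL, Matrix.mulVec_single]
        rwa [h2] at hcol
      have hRe : ∀ i j, ((M i j).re : ℂ) = M i j := fun i j =>
        Complex.ext (by simp) (by simp [hreal i j])
      have hoff : ∀ i j, i ≠ j → M i j = 0 := by
        intro i j hij
        have hmem : actL M (Pi.single j (Complex.exp (θ j * Complex.I))) ∈ Vtheta 3 θ := by
          rw [← hmθ]
          exact Submodule.mem_map_of_mem (Submodule.subset_span ⟨j, rfl⟩)
        have h1 := (mem_Vtheta_iff θ _).mp hmem i
        have h2 : (actL M (Pi.single j (Complex.exp (θ j * Complex.I)))) i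
            = M i j * Complex.exp (θ j * Complex.I) := by
          simp [actL, Matrix.mulVec_single]
        rw [h2, ← hRe i j] at h1
        have h3 : (Complex.exp (-θ i * Complex.I) *
            (((M i j).re : ℂ) * Complex.exp (θ j * Complex.I))).im
            = (M i j).re * Real.sin (θ j - θ i) := by
          rw [mul_left_comm, ← Complex.exp_add]
          have he : -↑(θ i) * Complex.I + ↑(θ j) * Complex.I
              = ((θ j - θ i : ℝ) : ℂ) * Complex.I := by push_cast; ring
          rw [he]
          simp only [Complex.mul_im, Complex.ofReal_re, Complex.ofReal_im,
            Complex.exp_ofReal_mul_I_im, zero_mul, add_zero]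
        rw [h3] at h1
        rcases mul_eq_zero.mp h1 with h | h
        · exact Complex.ext (by simp [h]) (by simp [hreal i j])
        · exact absurd h (hsin i j hij)
      have hdiagM : M = Matrix.diagonal fun j => ((M j j).re : ℂ) := by
        ext i j
        by_cases h : i = j
        · subst h
          rw [Matrix.diagonal_apply_eq]
          exact (hRe i i).symm
        · rw [Matrix.diagonal_apply_ne _ h]
          exact hoff i j h
      have hunit : star M * M = 1 := Matrix.UnitaryGroup.star_mul_self B
      have hsq : ∀ j, (M j j).re * (M j j).re = 1 := by
        intro j
        rw [hdiagM, Matrix.star_eq_conjTranspose, Matrix.diagonal_conjTranspose,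
          Matrix.diagonal_mul_diagonal] at hunit
        have h := (Matrix.ext_iff.mpr hunit) j j
        rw [Matrix.diagonal_apply_eq, Matrix.one_apply_eq] at h
        simp only [Pi.star_apply, Complex.star_def, Complex.conj_ofReal] at h
        exact_mod_cast h
      refine ⟨fun j => (M j j).re, fun j => mul_self_eq_one_iff.mp (hsq j), ?_, hdiagM⟩
      rw [hdiagM, Matrix.det_diagonal, Fin.prod_univ_three] at hdet
      exact_mod_cast hdet
    · rintro ⟨ε, hε, hprod, hdiag⟩
      have hsq : ∀ j, ε j * ε j = 1 := fun j => by
        rcases hε j with h | h <;> rw [h] <;> norm_num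
      have key : ∀ (f : Fin 3 → ℂ),
          Submodule.map (actL (B : Matrix (Fin 3) (Fin 3) ℂ))
            (Submodule.span ℝ (Set.range fun j => (Pi.single j (f j) : Fin 3 → ℂ)))
          = Submodule.span ℝ (Set.range fun j => (Pi.single j (f j) : Fin 3 → ℂ)) := by
        intro f
        apply map_span_eq _ _ ε _ hsq
        intro j
        funext i
        rw [hdiag]
        by_cases h : i = j
        · subst h
          simp [actL, Matrix.mulVec_diagonal, Complex.real_smul]
        · simp [actL, Matrix.mulVec_diagonal, Pi.single_eq_of_ne h]
      refine ⟨?_, ?_, ?_⟩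
      · rw [hdiag, Matrix.det_diagonal, Fin.prod_univ_three]
        have : ((ε 0 * ε 1 * ε 2 : ℝ) : ℂ) = 1 := by rw [hprod]; norm_num
        push_cast at this ⊢
        exact this
      · rw [V0]
        exact key fun _ => 1
      · rw [Vtheta]
        exact key fun j => Complex.exp (θ j * Complex.I)
  refine ⟨hset, ?_⟩
  have hmem : ∀ B : Matrix.unitaryGroup (Fin 3) ℂ, B ∈ stabSU θ ↔
      ∃ ε : Fin 3 → ℝ, (∀ j, ε j = 1 ∨ ε j = -1) ∧ ε 0 * ε 1 * ε 2 = 1 ∧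
        (B : Matrix (Fin 3) (Fin 3) ℂ) = Matrix.diagonal fun j => (ε j : ℂ) := by
    intro B
    have := Set.ext_iff.mp hset B
    simpa using this
  have hstabmem : ∀ q : ZMod 2 × ZMod 2,
      (⟨Matrix.diagonal fun j => ((eps3 q j : ℝ) : ℂ),
        diag_mem_unitary (eps3 q) (eps3_pm q)⟩ : Matrix.unitaryGroup (Fin 3) ℂ) ∈ stabSU θ :=
    fun q => (hmem _).mpr ⟨eps3 q, eps3_pm q, eps3_prod q, rfl⟩
  let f : Multiplicative (ZMod 2 × ZMod 2) →* ↥(stabSU θ) :=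
  { toFun := fun p => ⟨⟨Matrix.diagonal fun j => ((eps3 (Multiplicative.toAdd p) j : ℝ) : ℂ),
      diag_mem_unitary _ (eps3_pm _)⟩, hstabmem _⟩
    map_one' := by
      apply Subtype.ext
      apply Subtype.ext
      show (Matrix.diagonal fun j => ((eps3 (Multiplicative.toAdd
          (1 : Multiplicative (ZMod 2 × ZMod 2))) j : ℝ) : ℂ)) = 1
      have h : (fun j => ((eps3 (Multiplicative.toAdd
          (1 : Multiplicative (ZMod 2 × ZMod 2))) j : ℝ) : ℂ)) = fun _ => (1 : ℂ) := by
        funext j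
        fin_cases j <;> simp [eps3, sgn2]
      rw [h, Matrix.diagonal_one]
    map_mul' := by
      intro p q
      apply Subtype.ext
      apply Subtype.ext
      show (Matrix.diagonal fun j => ((eps3 (Multiplicative.toAdd (p * q)) j : ℝ) : ℂ))
        = (Matrix.diagonal fun j => ((eps3 (Multiplicative.toAdd p) j : ℝ) : ℂ))
          * (Matrix.diagonal fun j => ((eps3 (Multiplicative.toAdd q) j : ℝ) : ℂ))
      rw [Matrix.diagonal_mul_diagonal]
      have htoAdd : Multiplicative.toAdd (p * q)
          = Multiplicative.toAdd p + Multiplicative.toAdd q := rfl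
      rw [htoAdd]
      refine congrArg Matrix.diagonal (funext fun j => ?_)
      fin_cases j
      · show ((sgn2 ((Multiplicative.toAdd p + Multiplicative.toAdd q).1) : ℝ) : ℂ) = _
        rw [Prod.fst_add, sgn2_add]
        push_cast
        rfl
      · show ((sgn2 ((Multiplicative.toAdd p + Multiplicative.toAdd q).2) : ℝ) : ℂ) = _
        rw [Prod.snd_add, sgn2_add]
        push_cast
        rfl
      · show ((sgn2 ((Multiplicative.toAdd p + Multiplicative.toAdd q).1
            + (Multiplicative.toAdd p + Multiplicative.toAdd q).2) : ℝ) : ℂ) = _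
        rw [Prod.fst_add, Prod.snd_add]
        have harr : (Multiplicative.toAdd p).1 + (Multiplicative.toAdd q).1
            + ((Multiplicative.toAdd p).2 + (Multiplicative.toAdd q).2)
            = ((Multiplicative.toAdd p).1 + (Multiplicative.toAdd p).2)
              + ((Multiplicative.toAdd q).1 + (Multiplicative.toAdd q).2) := by ring
        rw [harr, sgn2_add]
        push_cast
        rfl }
  have hinj : Function.Injective f := by
    intro p q h
    have hmat : (Matrix.diagonal fun j => ((eps3 (Multiplicative.toAdd p) j : ℝ) : ℂ))
        = Matrix.diagonal fun j => ((eps3 (Multiplicative.toAdd q) j : ℝ) : ℂ) :=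
      congrArg Subtype.val (congrArg Subtype.val h)
    have h0 := Matrix.ext_iff.mpr hmat 0 0
    have h1 := Matrix.ext_iff.mpr hmat 1 1
    rw [Matrix.diagonal_apply_eq, Matrix.diagonal_apply_eq] at h0 h1
    have e0 : sgn2 (Multiplicative.toAdd p).1 = sgn2 (Multiplicative.toAdd q).1 := by
      exact_mod_cast h0
    have e1 : sgn2 (Multiplicative.toAdd p).2 = sgn2 (Multiplicative.toAdd q).2 := by
      exact_mod_cast h1
    have : Multiplicative.toAdd p = Multiplicative.toAdd q :=
      Prod.ext (sgn2_inj e0) (sgn2_inj e1)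
    exact Multiplicative.toAdd.injective this
  have hsurj : Function.Surjective f := by
    intro B
    obtain ⟨ε, hε, hprod, hdiag⟩ := (hmem ↑B).mp B.2
    refine ⟨Multiplicative.ofAdd (inv2 (ε 0), inv2 (ε 1)), ?_⟩
    apply Subtype.ext
    apply Subtype.ext
    show (Matrix.diagonal fun j => ((eps3 (Multiplicative.toAdd (Multiplicative.ofAdd
        (inv2 (ε 0), inv2 (ε 1)))) j : ℝ) : ℂ)) = (B : Matrix (Fin 3) (Fin 3) ℂ)
    rw [hdiag]
    refine congrArg Matrix.diagonal (funext fun j => ?_)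
    have h2 : ε 0 * ε 1 = ε 2 := by
      have hsq2 : ε 2 * ε 2 = 1 := by rcases hε 2 with h | h <;> rw [h] <;> norm_num
      calc ε 0 * ε 1 = ε 0 * ε 1 * (ε 2 * ε 2) := by rw [hsq2, mul_one]
        _ = (ε 0 * ε 1 * ε 2) * ε 2 := by ring
        _ = ε 2 := by rw [hprod, one_mul]
    fin_cases j
    · show ((sgn2 (inv2 (ε 0)) : ℝ) : ℂ) = ((ε 0 : ℝ) : ℂ)
      rw [sgn2_inv2 (hε 0)]
    · show ((sgn2 (inv2 (ε 1)) : ℝ) : ℂ) = ((ε 1 : ℝ) : ℂ)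
      rw [sgn2_inv2 (hε 1)]
    · show ((sgn2 (inv2 (ε 0) + inv2 (ε 1)) : ℝ) : ℂ) = ((ε 2 : ℝ) : ℂ)
      rw [sgn2_add, sgn2_inv2 (hε 0), sgn2_inv2 (hε 1), h2]
  exact ⟨(MulEquiv.ofBijective f ⟨hinj, hsurj⟩).symm⟩
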